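/- arXiv:2106.10145 — 7 statements merged into one kernel-verified Lean document; each statement's English description precedes it below -/
import Mathlib

section
/- Let q be an odd prime with q ≠ 3. Then there are no integers m ≥ 2 and n ≥ 1 with q^m = 2^n + 1. -/
theorem no_fermat_catalan (q : ℕ) (hq : q.Prime) (hodd : Odd q) (hq3 : q ≠ 3) :
    ¬ ∃ m n : ℕ, 2 ≤ m ∧ 1 ≤ n ∧ q ^ m = 2 ^ n + 1 := by
  rintro ⟨m, n, hm, hn, heq⟩
  have hq2 := hq.two_le
  have hqo : q % 2 = 1 := Nat.odd_iff.mp hodd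
  have hq5 : 5 ≤ q := by omega
  rcases Nat.even_or_odd m with he | ho
  · -- m even: m = k + k
    obtain ⟨k, hk⟩ := he
    have hk1 : 1 ≤ k := by omega
    have hqk : 5 ≤ q ^ k := le_trans hq5 (Nat.le_self_pow (by omega) q)
    have hqq : q ^ k * q ^ k = 2 ^ n + 1 := by
      rw [← pow_add, ← hk]; exact heq
    obtain ⟨s, hs⟩ : ∃ s, q ^ k = s + 1 := ⟨q ^ k - 1, by omega⟩
    have key : (q ^ k - 1) * (q ^ k + 1) = 2 ^ n := by
      have h2 : s * (s + 2) = 2 ^ n := by nlinarith [hqq]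
      rw [hs, Nat.add_sub_cancel]
      linarith [h2]
    obtain ⟨a, _, ha⟩ := (Nat.dvd_prime_pow Nat.prime_two).mp
      (⟨q ^ k + 1, key.symm⟩ : q ^ k - 1 ∣ 2 ^ n)
    obtain ⟨b, _, hb⟩ := (Nat.dvd_prime_pow Nat.prime_two).mp
      (⟨q ^ k - 1, by rw [mul_comm]; exact key.symm⟩ : q ^ k + 1 ∣ 2 ^ n)
    have ha4 : 4 ≤ 2 ^ a := by omega
    have hb4 : 4 ≤ 2 ^ b := by omega
    have ha2 : 2 ≤ a := by
      by_contra h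
      interval_cases a <;> omega
    have hb2 : 2 ≤ b := by
      by_contra h
      interval_cases b <;> omega
    have hda : (4 : ℕ) ∣ 2 ^ a := by
      have := pow_dvd_pow 2 ha2; norm_num at this; exact this
    have hdb : (4 : ℕ) ∣ 2 ^ b := by
      have := pow_dvd_pow 2 hb2; norm_num at this; exact this
    omega
  · -- m odd
    set S := ∑ i ∈ Finset.range m, q ^ i with hSdef
    have hgs : (S : ℤ) * ((q : ℤ) - 1) = 2 ^ n := by
      have hZ : ((q : ℤ)) ^ m = 2 ^ n + 1 := by exact_mod_cast heq
      have : (S : ℤ) = ∑ i ∈ Finset.range m, (q : ℤ) ^ i := by push_cast [hSdef]; rfl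
      rw [this, geom_sum_mul, hZ]; ring
    have hdvd : (S : ℤ) ∣ (2 : ℤ) ^ n := ⟨(q : ℤ) - 1, hgs.symm⟩
    have hdvdN : S ∣ 2 ^ n := by exact_mod_cast hdvd
    obtain ⟨j, _, hS⟩ := (Nat.dvd_prime_pow Nat.prime_two).mp hdvdN
    have hterm : ∀ i, q ^ i % 2 = 1 := fun i => Nat.odd_iff.mp (hodd.pow)
    have hSodd : S % 2 = 1 := by
      rw [hSdef, Finset.sum_nat_mod]
      simp only [hterm]
      simp [Nat.odd_iff.mp ho]
    have hj0 : j = 0 := by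
      by_contra h
      have : (2 : ℕ) ∣ 2 ^ j := dvd_pow_self 2 h
      omega
    have hS1 : S = 1 := by rw [hS, hj0]; rfl
    have hmS : m ≤ S := by
      have := Finset.card_nsmul_le_sum (Finset.range m) (fun i => q ^ i) 1
        (fun i _ => Nat.one_le_pow _ _ (by omega))
      simpa using this
    omega
end

section
/- Let q be an odd prime. If q^m = 2^n + 1 with m ≥ 2 and n ≥ 1, then q = 3, m = 2 and n = 3. -/
theorem fermat_catalan_classification (q m n : ℕ) (hq : q.Prime) (hodd : Odd q)
    (hm : 2 ≤ m) (hn : 1 ≤ n) (h : q ^ m = 2 ^ n + 1) :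
    q = 3 ∧ m = 2 ∧ n = 3 := by
  have hq3 : 3 ≤ q := by
    rcases hq.eq_two_or_odd' with h2 | _
    · exact absurd (h2 ▸ hodd) (by decide)
    · have := hq.two_le
      rcases hodd with ⟨t, ht⟩
      omega
  obtain ⟨r, hr⟩ : ∃ r, q = r + 1 := ⟨q - 1, by omega⟩
  have hr2 : 2 ≤ r := by omega
  -- geometric sum identity
  have geom : ∀ M : ℕ, r * (∑ i ∈ Finset.range M, q ^ i) + 1 = q ^ M := by
    intro M
    induction M with
    | zero => simp
    | succ M ih =>
      rw [Finset.sum_range_succ, Nat.mul_add, pow_succ, hr]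
      rw [hr] at ih
      nlinarith [ih]
  set S := ∑ i ∈ Finset.range m, q ^ i with hSdef
  have hS : r * S = 2 ^ n := by
    have := geom m
    rw [← hSdef] at this
    omega
  -- S parity equals m parity
  have hSmod : S % 2 = m % 2 := by
    rw [hSdef, Finset.sum_nat_mod]
    have : ∀ i ∈ Finset.range m, q ^ i % 2 = 1 := by
      intro i _
      exact Nat.odd_iff.mp (hodd.pow)
    rw [Finset.sum_congr rfl this]
    simp [Nat.mul_mod]
  -- S divides 2^n so S is a power of 2
  have hSdvd : S ∣ 2 ^ n := ⟨r, by rw [mul_comm]; exact hS.symm⟩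
  obtain ⟨j, hj, hSj⟩ := (Nat.dvd_prime_pow Nat.prime_two).mp hSdvd
  have hSge : 1 + q ≤ S := by
    rw [hSdef]
    calc 1 + q = ∑ i ∈ Finset.range 2, q ^ i := by simp [Finset.sum_range_succ]
    _ ≤ _ := Finset.sum_le_sum_of_subset (Finset.range_subset_range.mpr hm)
  have hj1 : 1 ≤ j := by
    by_contra hc
    interval_cases j <;> omega
  have hSeven : S % 2 = 0 := by
    rw [hSj]
    rcases Nat.exists_eq_add_of_le hj1 with ⟨c, rfl⟩
    simp [pow_succ, Nat.mul_mod]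
  have hmeven : m % 2 = 0 := by omega
  obtain ⟨k, hk⟩ : ∃ k, m = 2 * k := ⟨m / 2, by omega⟩
  have hk1 : 1 ≤ k := by omega
  set x := q ^ k with hx
  have hxodd : Odd x := hodd.pow
  have hx3 : 3 ≤ x := by
    calc 3 ≤ q := hq3
    _ = q ^ 1 := (pow_one q).symm
    _ ≤ q ^ k := Nat.pow_le_pow_right (by omega) hk1
  have hx2 : x ^ 2 = 2 ^ n + 1 := by
    rw [hx, ← pow_mul, mul_comm k 2, ← hk, h]
  obtain ⟨y, hy⟩ : ∃ y, x = y + 1 := ⟨x - 1, by omega⟩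
  have hfact : y * (x + 1) = 2 ^ n := by nlinarith [hx2]
  have hd1 : y ∣ 2 ^ n := ⟨x + 1, hfact.symm⟩
  have hd2 : x + 1 ∣ 2 ^ n := ⟨y, by rw [mul_comm]; exact hfact.symm⟩
  obtain ⟨a, ha, hxa⟩ := (Nat.dvd_prime_pow Nat.prime_two).mp hd1
  obtain ⟨b, hb, hxb⟩ := (Nat.dvd_prime_pow Nat.prime_two).mp hd2
  -- y even so a ≥ 1
  have hxm1even : y % 2 = 0 := by
    rcases hxodd with ⟨t, ht⟩; omega
  have ha1 : 1 ≤ a := by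
    by_contra hc
    interval_cases a <;> omega
  have hba : a < b := by
    have : y < x + 1 := by omega
    rw [hxa, hxb] at this
    exact (Nat.pow_lt_pow_iff_right (by norm_num)).mp this
  -- 2^b = 2^a + 2, a ≥ 2 impossible
  have hab : 2 ^ b = 2 ^ a + 2 := by omega
  have ha1' : a = 1 := by
    by_contra hc
    have ha2 : 2 ≤ a := by omega
    have h4a : (4 : ℕ) ∣ 2 ^ a := by
      calc (4:ℕ) = 2 ^ 2 := by norm_num
      _ ∣ 2 ^ a := pow_dvd_pow 2 ha2
    have h4b : (4 : ℕ) ∣ 2 ^ b := by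
      calc (4:ℕ) = 2 ^ 2 := by norm_num
      _ ∣ 2 ^ b := pow_dvd_pow 2 (by omega)
    omega
  have hxval : x = 3 := by
    have : y = 2 := by rw [hxa, ha1']; norm_num
    omega
  -- q^k = 3 forces q = 3, k = 1
  have hq3' : q = 3 := by
    have hdvd : q ∣ 3 := by
      rw [← hxval, hx]
      exact dvd_pow_self q (by omega)
    have := Nat.le_of_dvd (by norm_num) hdvd
    omega
  have hk1' : k = 1 := by
    by_contra hc
    have : 2 ≤ k := by omega
    have : 9 ≤ x := by
      calc (9:ℕ) = 3 ^ 2 := by norm_num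
      _ = q ^ 2 := by rw [hq3']
      _ ≤ q ^ k := Nat.pow_le_pow_right (by omega) this
    omega
  have hm2 : m = 2 := by omega
  have hn3 : n = 3 := by
    have : 2 ^ n = 2 ^ 3 := by
      rw [hm2, hq3'] at h; omega
    exact Nat.pow_right_injective (le_refl 2) this
  exact ⟨hq3', hm2, hn3⟩
end

section
/- Let q be an odd prime. Then there are no integers m ≥ 2 and n ≥ 1 with q^m = 2^n - 1. -/
theorem no_mersenne_catalan (q : ℕ) (hq : q.Prime) (hodd : Odd q) :
    ¬ ∃ m n : ℕ, 2 ≤ m ∧ 1 ≤ n ∧ (q : ℤ) ^ m = 2 ^ n - 1 := by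
  rintro ⟨m, n, hm, hn, heq⟩
  have hq2 : q ≠ 2 := by
    rintro rfl
    exact (Nat.not_odd_iff_even.mpr even_two) hodd
  have hq3 : 3 ≤ q := by
    have := hq.two_le
    omega
  have hq3' : (3 : ℤ) ≤ (q : ℤ) := by exact_mod_cast hq3
  have heq' : (q : ℤ) ^ m + 1 = 2 ^ n := by linarith
  have hoddq : Odd (q : ℤ) := by exact_mod_cast hodd
  rcases Nat.even_or_odd m with he | ho
  · -- m even: q^m ≡ 1 mod 4, so 2^n ≡ 2 mod 4, forcing n = 1
    obtain ⟨k, hk⟩ := he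
    have hk1 : 1 ≤ k := by omega
    have hsq : ((q : ℤ) ^ k) ^ 2 % 4 = 1 :=
      Int.sq_mod_four_eq_one_of_odd (hoddq.pow)
    have hqm : (q : ℤ) ^ m = ((q : ℤ) ^ k) ^ 2 := by
      rw [← pow_mul]; congr 1; omega
    have h2n : (2 : ℤ) ^ n % 4 = 2 := by
      rw [← heq', hqm]
      omega
    rcases Nat.lt_or_ge n 2 with hn2 | hn2
    · interval_cases n
      · have : (q : ℤ) ^ m = 1 := by norm_num at heq; linarith
        have hlt : (q : ℤ) ^ 1 ≤ (q : ℤ) ^ m :=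
          pow_le_pow_right₀ (by linarith) (by omega)
        simp at hlt
        linarith
    · have : (4 : ℤ) ∣ 2 ^ n := by
        have : (2 : ℤ) ^ 2 ∣ 2 ^ n := pow_dvd_pow 2 hn2
        norm_num at this ⊢
        exact this
      omega
  · -- m odd: factor q^m + 1 = (q+1) * S with S odd and S > 1
    set S : ℤ := ∑ i ∈ Finset.range m, (-(q : ℤ)) ^ i with hSdef
    have hfac : S * ((q : ℤ) + 1) = (q : ℤ) ^ m + 1 := by
      have := geom_sum_mul (-(q : ℤ)) m
      have hneg : (-(q : ℤ)) ^ m = -((q : ℤ) ^ m) := ho.neg_pow _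
      rw [hneg] at this
      linarith [this]
    have hSodd : ¬ (2 : ℤ) ∣ S := by
      intro hdvd
      have : ((S : ℤ) : ZMod 2) = 0 := by
        exact_mod_cast (ZMod.intCast_zmod_eq_zero_iff_dvd S 2).mpr hdvd
      rw [hSdef] at this
      push_cast at this
      have hq1 : ((q : ℕ) : ZMod 2) = 1 := by
        rw [← ZMod.natCast_mod, Nat.odd_iff.mp hodd]; rfl
      rw [hq1] at this
      have hm1 : ((m : ℕ) : ZMod 2) = 1 := by
        rw [← ZMod.natCast_mod, Nat.odd_iff.mp ho]; rfl
      simp only [show (-(1 : ZMod 2)) = 1 by decide, one_pow, Finset.sum_const,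
        Finset.card_range, nsmul_eq_mul, mul_one] at this
      rw [hm1] at this
      exact one_ne_zero this
    have hSdvd : S ∣ 2 ^ n := ⟨(q : ℤ) + 1, by rw [← heq', hfac]⟩
    have hco : IsCoprime S (2 : ℤ) := by
      rw [Int.isCoprime_iff_gcd_eq_one]
      have h2 : (Int.gcd S 2 : ℤ) ∣ 2 := Int.gcd_dvd_right S 2
      have h2' : Int.gcd S 2 ∣ 2 := by exact_mod_cast h2
      have hle : Int.gcd S 2 ≤ 2 := Nat.le_of_dvd (by norm_num) h2'
      interval_cases h : Int.gcd S 2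
      · exact absurd (Int.gcd_eq_zero_iff.mp h).2 (by norm_num)
      · rfl
      · have hh := Int.gcd_dvd_left (a := S) (b := 2)
        rw [h] at hh
        exact absurd (by exact_mod_cast hh) hSodd
    have hunit : IsUnit S := (hco.pow_right (n := n)).isUnit_of_dvd' dvd_rfl hSdvd
    rcases Int.isUnit_iff.mp hunit with h1 | h1
    · rw [h1, one_mul] at hfac
      have hlt : (q : ℤ) ^ 1 < (q : ℤ) ^ m :=
        pow_lt_pow_right₀ (by linarith) (by omega)
      simp at hlt
      linarith
    · rw [h1] at hfac
      have : (0 : ℤ) < (q : ℤ) ^ m := pow_pos (by linarith) m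
      linarith
end

section
/- Let q be an odd prime and n ≥ 2 an integer. If q^m + 1 = 2^n for some m ≥ 1, then q has multiplicative order 2 modulo 2^n, i.e., q^2 ≡ 1 mod 2^n. -/
theorem order_two_of_mersenne_power (q m n : ℕ) (hq : q.Prime) (hodd : Odd q)
    (hn : 2 ≤ n) (hm : 1 ≤ m) (h : q ^ m + 1 = 2 ^ n) :
    orderOf (q : ZMod (2 ^ n)) = 2 ∧ q ^ 2 ≡ 1 [MOD 2 ^ n] := by
  have hN4 : (4 : ℕ) ∣ 2 ^ n := by
    have := pow_dvd_pow 2 hn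
    simpa using this
  -- m is odd
  have hmodd : Odd m := by
    rcases Nat.even_or_odd m with he | ho
    · exfalso
      obtain ⟨t, ht⟩ := he
      obtain ⟨a, ha⟩ : Odd (q ^ t) := hodd.pow
      have hqm : q ^ m = (q ^ t) ^ 2 := by rw [ht]; ring
      have hsq : (2 * a + 1) ^ 2 = 4 * (a * a + a) + 1 := by ring
      rw [hqm, ha] at h
      omega
    · exact ho
  have hpos : (0:ℕ) < 2 ^ n := by positivity
  have h2lt : (2:ℕ) < 2 ^ n := by
    calc (2:ℕ) < 4 := by norm_num
    _ ≤ 2 ^ n := Nat.le_of_dvd hpos hN4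
  haveI : NeZero (2 ^ n) := ⟨by omega⟩
  haveI : Fact (1 < 2 ^ n) := ⟨by omega⟩
  -- cast the equation into ZMod (2^n)
  have hx : (q : ZMod (2 ^ n)) ^ m = -1 := by
    have hc : ((q ^ m + 1 : ℕ) : ZMod (2 ^ n)) = ((2 ^ n : ℕ) : ZMod (2 ^ n)) := by
      rw [h]
    rw [ZMod.natCast_self] at hc
    push_cast at hc
    linear_combination hc
  have hneg : (-1 : ZMod (2 ^ n)) ≠ 1 := by
    haveI : Fact (2 < 2 ^ n) := ⟨h2lt⟩
    exact ZMod.neg_one_ne_one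
  -- q is a unit
  have hcop : Nat.Coprime q (2 ^ n) := by
    apply Nat.Coprime.pow_right
    exact hodd.coprime_two_right
  have hunit : IsUnit (q : ZMod (2 ^ n)) := (ZMod.isUnit_iff_coprime q (2 ^ n)).mpr hcop
  obtain ⟨u, hu⟩ := hunit
  -- order of u divides 2^(n-1)
  have hcard : Fintype.card (ZMod (2 ^ n))ˣ = 2 ^ (n - 1) := by
    rw [ZMod.card_units_eq_totient, Nat.totient_prime_pow Nat.prime_two (by omega)]
    simp
  have hord_dvd : orderOf u ∣ 2 ^ (n - 1) := hcard ▸ orderOf_dvd_card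
  obtain ⟨k, hk, hordk⟩ := (Nat.dvd_prime_pow Nat.prime_two).mp hord_dvd
  -- order divides 2*m
  have hdvd2m : orderOf u ∣ 2 * m := by
    apply orderOf_dvd_of_pow_eq_one
    have : ((u : ZMod (2 ^ n)) ^ (2 * m)) = 1 := by
      rw [hu, mul_comm, pow_mul, hx]
      norm_num
    exact Units.ext (by simpa using this)
  have hdvd2 : orderOf u ∣ 2 := by
    have hcop2 : Nat.Coprime (orderOf u) m := by
      rw [hordk]
      apply Nat.Coprime.pow_left
      exact Nat.coprime_comm.mp hmodd.coprime_two_right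
    exact hcop2.dvd_of_dvd_mul_right hdvd2m
  have hordne1 : orderOf u ≠ 1 := by
    intro h1
    have : u = 1 := orderOf_eq_one_iff.mp h1
    rw [this] at hu
    rw [← hu] at hx
    simp at hx
    exact hneg hx.symm
  have hord2 : orderOf u = 2 := by
    rcases (Nat.prime_two.eq_one_or_self_of_dvd _ hdvd2) with h1 | h2
    · exact absurd h1 hordne1
    · exact h2
  have hordx : orderOf (q : ZMod (2 ^ n)) = 2 := by
    rw [← hu, orderOf_units, hord2]
  refine ⟨hordx, ?_⟩
  have hu2 : u ^ 2 = 1 := by have := pow_orderOf_eq_one u; rwa [hord2] at this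
  have hx2 : (q : ZMod (2 ^ n)) ^ 2 = 1 := by
    rw [← hu, ← Units.val_pow_eq_pow_val, hu2, Units.val_one]
  have : ((q ^ 2 : ℕ) : ZMod (2 ^ n)) = ((1 : ℕ) : ZMod (2 ^ n)) := by
    push_cast
    exact hx2
  exact (ZMod.natCast_eq_natCast_iff _ _ _).mp this
end

section
/- The only solutions u ∈ ℤ[1/2]^× of the 2-unit equation, i.e., u with 1 - u also in ℤ[1/2]^×, are u ∈ {2, -1, 1/2}. -/
lemma key_sub (a b : ℤ) (h : (2:ℚ)^a - 2^b = 1) : a = 1 ∧ b = 0 := by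
  have hpa : (0:ℚ) < 2^a := zpow_pos (by norm_num) _
  have hpb : (0:ℚ) < 2^b := zpow_pos (by norm_num) _
  by_cases hb : 0 ≤ b
  · -- a ≥ 1 since 2^a = 1 + 2^b ≥ 2
    have hb1 : (1:ℚ) ≤ 2^b := one_le_zpow₀ (by norm_num) hb
    have ha2 : (2:ℚ)^(1:ℤ) ≤ 2^a := by
      rw [zpow_one]; linarith
    have ha1 : (1:ℤ) ≤ a := by
      rwa [zpow_le_zpow_iff_right₀ (by norm_num : (1:ℚ) < 2)] at ha2
    have ha0 : 0 ≤ a := by omega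
    -- move to naturals
    set na := a.toNat with hna
    set nb := b.toNat with hnb
    have ea : (2:ℚ)^a = (2:ℚ)^na := by rw [← zpow_natCast]; congr 1; omega
    have eb : (2:ℚ)^b = (2:ℚ)^nb := by rw [← zpow_natCast]; congr 1; omega
    rw [ea, eb] at h
    have hn : (2:ℕ)^na = 2^nb + 1 := by
      have : ((2:ℕ)^na : ℚ) = ((2^nb + 1 : ℕ) : ℚ) := by push_cast; linarith
      exact_mod_cast this
    have hna1 : 1 ≤ na := by omega
    have hnb0 : nb = 0 := by
      by_contra hc
      have h1 : 1 ≤ nb := by omega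
      have e1 : 2 ∣ (2:ℕ)^na := dvd_pow_self 2 (by omega)
      have e2 : 2 ∣ (2:ℕ)^nb := dvd_pow_self 2 (by omega)
      omega
    rw [hnb0] at hn
    simp at hn
    have : na = 1 := by
      have := Nat.pow_right_injective (le_refl 2) (a₁ := na) (a₂ := 1)
      simp at this
      omega
    constructor <;> omega
  · -- b < 0 : 1 < 2^a < 2, contradiction
    have hblt : (2:ℚ)^b < 2^(0:ℤ) := by
      rw [zpow_lt_zpow_iff_right₀ (by norm_num : (1:ℚ) < 2)]; omega
    rw [zpow_zero] at hblt
    have h1 : (2:ℚ)^(0:ℤ) < 2^a := by rw [zpow_zero]; linarith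
    have h2 : (2:ℚ)^a < 2^(1:ℤ) := by rw [zpow_one]; linarith
    rw [zpow_lt_zpow_iff_right₀ (by norm_num : (1:ℚ) < 2)] at h1 h2
    omega

lemma key_add (a b : ℤ) (h : (2:ℚ)^a + 2^b = 1) : a = -1 ∧ b = -1 := by
  have hpa : (0:ℚ) < 2^a := zpow_pos (by norm_num) _
  have hpb : (0:ℚ) < 2^b := zpow_pos (by norm_num) _
  have ha0 : a < 0 := by
    by_contra hc
    have : (1:ℚ) ≤ 2^a := one_le_zpow₀ (by norm_num) (by omega)
    linarith
  have hb0 : b < 0 := by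
    by_contra hc
    have : (1:ℚ) ≤ 2^b := one_le_zpow₀ (by norm_num) (by omega)
    linarith
  have ha : (2:ℚ)^a ≤ 2^(-1:ℤ) :=
    zpow_le_zpow_right₀ (by norm_num) (by omega)
  have hb : (2:ℚ)^b ≤ 2^(-1:ℤ) :=
    zpow_le_zpow_right₀ (by norm_num) (by omega)
  have hhalf : (2:ℚ)^(-1:ℤ) = 1/2 := by norm_num
  rw [hhalf] at ha hb
  have ea : (2:ℚ)^a = 1/2 := by linarith
  have eb : (2:ℚ)^b = 1/2 := by linarith
  rw [← hhalf] at ea eb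
  exact ⟨zpow_right_injective₀ (by norm_num) (by norm_num) ea,
    zpow_right_injective₀ (by norm_num) (by norm_num) eb⟩

/-- `u` is a unit of `ℤ[1/2]`, i.e. of the form `± 2^a` with `a : ℤ`. -/
def IsTwoUnit (u : ℚ) : Prop :=
  ∃ (ε : ℚ) (a : ℤ), (ε = 1 ∨ ε = -1) ∧ u = ε * (2 : ℚ) ^ a

theorem two_unit_equation_solutions (u : ℚ) :
    (IsTwoUnit u ∧ IsTwoUnit (1 - u)) ↔ (u = 2 ∨ u = -1 ∨ u = 1/2) := by
  constructor
  · rintro ⟨⟨ε, a, hε, hu⟩, ⟨δ, b, hδ, hv⟩⟩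
    have heq : ε * 2^a + δ * 2^b = 1 := by linarith [hu, hv]
    have hpa : (0:ℚ) < 2^a := zpow_pos (by norm_num) _
    have hpb : (0:ℚ) < 2^b := zpow_pos (by norm_num) _
    rcases hε with rfl | rfl <;> rcases hδ with rfl | rfl
    · -- 2^a + 2^b = 1
      have := key_add a b (by linarith)
      right; right; rw [hu, this.1]; norm_num
    · -- 2^a - 2^b = 1
      have := key_sub a b (by linarith)
      left; rw [hu, this.1]; norm_num
    · -- 2^b - 2^a = 1
      have := key_sub b a (by linarith)
      right; left; rw [hu, this.2]; norm_num
    · linarith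
  · rintro (rfl | rfl | rfl)
    · exact ⟨⟨1, 1, Or.inl rfl, by norm_num⟩, ⟨-1, 0, Or.inr rfl, by norm_num⟩⟩
    · exact ⟨⟨-1, 0, Or.inr rfl, by norm_num⟩, ⟨1, 1, Or.inl rfl, by norm_num⟩⟩
    · exact ⟨⟨1, -1, Or.inl rfl, by norm_num⟩, ⟨1, -1, Or.inl rfl, by norm_num⟩⟩
end

section
/- Let q > 3 be a prime which is neither of the form 2^n + 1 nor 2^n - 1. Then the only solutions of the S-unit equation for S = {2, q}, i.e., u ∈ ℤ[1/(2q)]^× with 1 - u ∈ ℤ[1/(2q)]^×, are u ∈ {2, -1, 1/2}. -/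
/-- parity of a geometric sum -/
lemma geom_sum_mod_two (x : ℤ) (hx : x % 2 = 1) (n : ℕ) :
    (∑ i ∈ Finset.range n, x ^ i) % 2 = n % 2 := by
  induction n with
  | zero => simp
  | succ k ih =>
    rw [Finset.sum_range_succ]
    have hxk : x ^ k % 2 = 1 := Int.odd_iff.mp ((Int.odd_iff.mpr hx).pow)
    omega

lemma odd_dvd_two_pow {n E : ℕ} (h : n ∣ 2 ^ E) (ho : n % 2 = 1) : n = 1 := by
  obtain ⟨i, _, rfl⟩ := (Nat.dvd_prime_pow Nat.prime_two).mp h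
  rcases i with _ | i
  · rfl
  · exfalso
    have : 2 ∣ 2 ^ (i + 1) := dvd_pow_self 2 (Nat.succ_ne_zero i)
    omega

/-- no solution to `q^F = 2^E + 1` with `F ≥ 2`, `q > 3` odd -/
lemma catalan1 (q : ℕ) (hodd : q % 2 = 1) (hq3 : 3 < q) {F E : ℕ}
    (hF2 : 2 ≤ F) (h : q ^ F = 2 ^ E + 1) : False := by
  rcases Nat.even_or_odd F with hFe | hFo
  · -- F even : (q^G - 1)(q^G + 1) = 2^E
    obtain ⟨G, rfl⟩ := hFe
    have hG : G ≠ 0 := by omega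
    have hr : 5 ≤ q ^ G := le_trans (by omega) (Nat.le_self_pow hG q)
    obtain ⟨n, hn⟩ : ∃ n, q ^ G = n + 1 := ⟨q ^ G - 1, by omega⟩
    have hqq : q ^ (G + G) = q ^ G * q ^ G := by rw [pow_add]
    have key : n * (n + 2) = 2 ^ E := by
      have e1 : (n + 1) * (n + 1) = n * n + 2 * n + 1 := by ring
      have e2 : n * (n + 2) = n * n + 2 * n := by ring
      have e3 : (n+1) * (n+1) = 2 ^ E + 1 := by rw [← hn, ← hqq]; exact h
      linarith
    have hn4 : 4 ≤ n := by linarith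
    have hd1 : n ∣ 2 ^ E := ⟨n + 2, key.symm⟩
    have hd2 : (n + 2) ∣ 2 ^ E := ⟨n, by rw [← key]; ring⟩
    obtain ⟨i, _, hi⟩ := (Nat.dvd_prime_pow Nat.prime_two).mp hd1
    obtain ⟨j, _, hj⟩ := (Nat.dvd_prime_pow Nat.prime_two).mp hd2
    have hi2 : 2 ≤ i := by
      by_contra hc
      interval_cases i <;> omega
    have hj2 : 2 ≤ j := by
      by_contra hc
      interval_cases j <;> omega
    have di : 2 ^ i = 4 * 2 ^ (i - 2) := by
      rw [show i = 2 + (i - 2) by omega, pow_add]; norm_num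
    have dj : 2 ^ j = 4 * 2 ^ (j - 2) := by
      rw [show j = 2 + (j - 2) by omega, pow_add]; norm_num
    have e1 : n = 4 * 2 ^ (i - 2) := by rw [hi, di]
    have e2 : n + 2 = 4 * 2 ^ (j - 2) := by rw [hj, dj]
    generalize 2 ^ (i - 2) = X at e1
    generalize 2 ^ (j - 2) = Y at e2
    omega
  · -- F odd : factor q^F - 1 = (q-1) * S
    have hS := geom_sum_mul (q : ℤ) F
    set S : ℤ := ∑ i ∈ Finset.range F, (q : ℤ) ^ i with hSdef
    have hqF : (q : ℤ) ^ F = 2 ^ E + 1 := by exact_mod_cast h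
    have hfact : S * ((q : ℤ) - 1) = 2 ^ E := by rw [hS, hqF]; ring
    have hSodd : S % 2 = 1 := by
      rw [hSdef, geom_sum_mod_two (q : ℤ) (by omega) F]
      have := Nat.odd_iff.mp hFo
      omega
    have hSdvd : S.natAbs ∣ 2 ^ E := by
      have h1 : S ∣ (2 : ℤ) ^ E := ⟨(q : ℤ) - 1, hfact.symm⟩
      have := Int.natAbs_dvd_natAbs.mpr h1
      simpa [Int.natAbs_pow] using this
    have hS1 : S.natAbs = 1 := odd_dvd_two_pow hSdvd (by omega)
    rcases Int.natAbs_eq_iff.mp hS1 with h1 | h1 <;> rw [h1] at hfact <;>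
      push_cast at hfact
    · have : (q : ℤ) ^ F = (q : ℤ) := by linarith
      have hq' : q ^ F = q ^ 1 := by rw [pow_one]; exact_mod_cast this
      have := Nat.pow_right_injective (by omega) hq'
      omega
    · have : (0 : ℤ) < 2 ^ E := by positivity
      have hq5 : (5 : ℤ) ≤ (q : ℤ) := by exact_mod_cast (show 5 ≤ q by omega)
      linarith

/-- no solution to `q^F + 1 = 2^E` with `F ≥ 2`, `q > 3` odd -/
lemma catalan2 (q : ℕ) (hodd : q % 2 = 1) (hq3 : 3 < q) {F E : ℕ}
    (hF2 : 2 ≤ F) (h : q ^ F + 1 = 2 ^ E) : False := by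
  have hq5 : 5 ≤ q := by omega
  have hqF : 25 ≤ q ^ F := by
    calc (25 : ℕ) = 5 * 5 := by norm_num
    _ ≤ q * q := Nat.mul_le_mul hq5 hq5
    _ = q ^ 2 := (sq q).symm
    _ ≤ q ^ F := Nat.pow_le_pow_right (by omega) hF2
  have hE2 : 2 ≤ E := by
    by_contra hc
    have : 2 ^ E ≤ 2 ^ 1 := Nat.pow_le_pow_right (by norm_num) (by omega)
    omega
  have hE4 : 2 ^ E = 4 * 2 ^ (E - 2) := by
    rw [show E = 2 + (E - 2) by omega, pow_add]; norm_num
  have hFo : Odd F := by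
    rcases Nat.even_or_odd F with hFe | hFo
    · exfalso
      obtain ⟨G, rfl⟩ := hFe
      have hrodd : Odd (q ^ G) := (Nat.odd_iff.mpr hodd).pow
      obtain ⟨k, hk⟩ := hrodd
      have hqq : q ^ (G + G) = q ^ G * q ^ G := by rw [pow_add]
      have e1 : (2 * k + 1) * (2 * k + 1) = 4 * (k * k) + 4 * k + 1 := by ring
      have key : 2 ^ E = 4 * (k * k) + 4 * k + 2 := by
        have h2 : q ^ (G + G) = 4 * (k * k) + 4 * k + 1 := by rw [hqq, hk, e1]
        linarith [h, h2]
      have hd : (4 : ℕ) ∣ 4 * (k * k) + 4 * k + 2 := by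
        rw [← key, hE4]; exact Dvd.intro _ rfl
      have : (4 : ℕ) ∣ 2 := by
        have hm : (4 : ℕ) ∣ 4 * (k * k) + 4 * k := ⟨k * k + k, by ring⟩
        exact (Nat.dvd_add_right hm).mp hd
      omega
    · exact hFo
  -- factor q^F + 1 = (q+1) * S
  have hS := geom_sum_mul (-(q : ℤ)) F
  set S : ℤ := ∑ i ∈ Finset.range F, (-(q : ℤ)) ^ i with hSdef
  have hneg : (-(q : ℤ)) ^ F = -((q : ℤ) ^ F) := Odd.neg_pow hFo _
  have hqF : (q : ℤ) ^ F + 1 = 2 ^ E := by exact_mod_cast h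
  have hfact : S * ((q : ℤ) + 1) = 2 ^ E := by
    have : S * (-(q : ℤ) - 1) = -((q : ℤ) ^ F) - 1 := by rw [hS, hneg]
    linarith [this, hqF]
  have hSodd : S % 2 = 1 := by
    rw [hSdef, geom_sum_mod_two (-(q : ℤ)) (by omega) F]
    have := Nat.odd_iff.mp hFo
    omega
  have hSdvd : S.natAbs ∣ 2 ^ E := by
    have h1 : S ∣ (2 : ℤ) ^ E := ⟨(q : ℤ) + 1, hfact.symm⟩
    have := Int.natAbs_dvd_natAbs.mpr h1
    simpa [Int.natAbs_pow] using this
  have hS1 : S.natAbs = 1 := odd_dvd_two_pow hSdvd (by omega)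
  rcases Int.natAbs_eq_iff.mp hS1 with h1 | h1 <;> rw [h1] at hfact <;>
    push_cast at hfact
  · have : (q : ℤ) ^ F = (q : ℤ) := by linarith
    have hq' : q ^ F = q ^ 1 := by rw [pow_one]; exact_mod_cast this
    have := Nat.pow_right_injective (by omega) hq'
    omega
  · have : (0 : ℤ) < 2 ^ E := by positivity
    have hq5 : (5 : ℤ) ≤ (q : ℤ) := by exact_mod_cast (show 5 ≤ q by omega)
    linarith

lemma lemA (q : ℕ) (hodd : q % 2 = 1) (hq3 : 3 < q)
    (hF : ∀ n : ℕ, q ≠ 2 ^ n + 1) : ∀ F E : ℕ, q ^ F ≠ 2 ^ E + 1 := by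
  intro F E h
  match F with
  | 0 =>
    rw [pow_zero] at h
    have : (0:ℕ) < 2 ^ E := Nat.pow_pos (n := E) (by norm_num)
    omega
  | 1 => rw [pow_one] at h; exact hF E h
  | (F + 2) => exact catalan1 q hodd hq3 (by omega) h

lemma lemB (q : ℕ) (hodd : q % 2 = 1) (hq3 : 3 < q)
    (hM : ∀ n : ℕ, (q : ℤ) ≠ 2 ^ n - 1) :
    ∀ F E : ℕ, q ^ F + 1 = 2 ^ E → F = 0 ∧ E = 1 := by
  intro F E h
  match F with
  | 0 =>
    rw [pow_zero] at h
    have hE : (2:ℕ) ^ E = 2 ^ 1 := by rw [pow_one]; omega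
    exact ⟨rfl, Nat.pow_right_injective (le_refl 2) hE⟩
  | 1 =>
    exfalso
    rw [pow_one] at h
    apply hM E
    have : ((q : ℤ) + 1) = 2 ^ E := by exact_mod_cast h
    linarith
  | (F + 2) => exact (catalan2 q hodd hq3 (by omega) h).elim

/-- core integral classification -/
lemma core (q : ℕ) (hq : q.Prime) (hq3 : 3 < q)
    (hF : ∀ n : ℕ, q ≠ 2 ^ n + 1) (hM : ∀ n : ℕ, (q : ℤ) ≠ 2 ^ n - 1)
    (a b c d e f : ℕ)
    (heq : 2 ^ a * q ^ b + 2 ^ c * q ^ d = 2 ^ e * q ^ f)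
    (h2z : a = 0 ∨ c = 0 ∨ e = 0) (hqz : b = 0 ∨ d = 0 ∨ f = 0) :
    a = 0 ∧ b = 0 ∧ c = 0 ∧ d = 0 ∧ e = 1 ∧ f = 0 := by
  have hodd : q % 2 = 1 := Nat.odd_iff.mp (hq.odd_of_ne_two (by omega))
  have hA := lemA q hodd hq3 hF
  have hB := lemB q hodd hq3 hM
  have hqnd : ∀ x : ℕ, ¬ q ∣ 2 ^ x := by
    intro x hx
    have := Nat.le_of_dvd (by norm_num) (hq.dvd_of_dvd_pow hx)
    omega
  have h2nd : ∀ x : ℕ, ¬ 2 ∣ q ^ x := by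
    intro x hx
    have := Nat.Prime.dvd_of_dvd_pow Nat.prime_two hx
    omega
  -- helper impossibilities
  have keyL : ∀ A C E y z : ℕ, 0 < y → 0 < z →
      2 ^ A + 2 ^ C * q ^ y = 2 ^ E * q ^ z → False := by
    intro A C E y z hy hz he
    have h1 : q ∣ 2 ^ C * q ^ y := dvd_mul_of_dvd_right (dvd_pow_self q (by omega)) _
    have h2 : q ∣ 2 ^ E * q ^ z := dvd_mul_of_dvd_right (dvd_pow_self q (by omega)) _
    have h3 : q ∣ 2 ^ A := by
      have h4 := Nat.dvd_sub h2 h1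
      rwa [Nat.sub_eq_of_eq_add he.symm] at h4
    exact hqnd A h3
  have keyR : ∀ A C E y z : ℕ, 0 < y → 0 < z →
      2 ^ A * q ^ y + 2 ^ C * q ^ z = 2 ^ E → False := by
    intro A C E y z hy hz he
    have h1 : q ∣ 2 ^ A * q ^ y := dvd_mul_of_dvd_right (dvd_pow_self q (by omega)) _
    have h2 : q ∣ 2 ^ C * q ^ z := dvd_mul_of_dvd_right (dvd_pow_self q (by omega)) _
    have h3 : q ∣ 2 ^ E := he ▸ Nat.dvd_add h1 h2
    exact hqnd E h3
  have key2L : ∀ B D F' y z : ℕ, 0 < y → 0 < z →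
      q ^ B + 2 ^ y * q ^ D = 2 ^ z * q ^ F' → False := by
    intro B D F' y z hy hz he
    have h1 : 2 ∣ 2 ^ y * q ^ D := dvd_mul_of_dvd_left (dvd_pow_self 2 (by omega)) _
    have h2 : 2 ∣ 2 ^ z * q ^ F' := dvd_mul_of_dvd_left (dvd_pow_self 2 (by omega)) _
    have h3 : 2 ∣ q ^ B := by
      have h4 := Nat.dvd_sub h2 h1
      rwa [Nat.sub_eq_of_eq_add he.symm] at h4
    exact h2nd B h3
  have key2R : ∀ B D F' y z : ℕ, 0 < y → 0 < z →
      2 ^ y * q ^ B + 2 ^ z * q ^ D = q ^ F' → False := by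
    intro B D F' y z hy hz he
    have h1 : 2 ∣ 2 ^ y * q ^ B := dvd_mul_of_dvd_left (dvd_pow_self 2 (by omega)) _
    have h2 : 2 ∣ 2 ^ z * q ^ D := dvd_mul_of_dvd_left (dvd_pow_self 2 (by omega)) _
    have h3 : 2 ∣ q ^ F' := he ▸ Nat.dvd_add h1 h2
    exact h2nd F' h3
  -- at least two of b, d, f are zero
  have Hq : (b = 0 ∧ d = 0) ∨ (b = 0 ∧ f = 0) ∨ (d = 0 ∧ f = 0) := by
    rcases Nat.eq_zero_or_pos b with hb | hb
    · rcases Nat.eq_zero_or_pos d with hd | hd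
      · exact Or.inl ⟨hb, hd⟩
      · rcases Nat.eq_zero_or_pos f with hf | hf
        · exact Or.inr (Or.inl ⟨hb, hf⟩)
        · exact (keyL a c e d f hd hf (by
            rw [hb, pow_zero, mul_one] at heq; exact heq)).elim
    · rcases Nat.eq_zero_or_pos d with hd | hd
      · rcases Nat.eq_zero_or_pos f with hf | hf
        · exact Or.inr (Or.inr ⟨hd, hf⟩)
        · exact (keyL c a e b f hb hf (by
            rw [hd, pow_zero, mul_one] at heq; linarith)).elim
      · have hf : f = 0 := by rcases hqz with h | h | h <;> omega
        exact (keyR a c e b d hb hd (by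
          rw [hf, pow_zero, mul_one] at heq; exact heq)).elim
  -- at least two of a, c, e are zero
  have H2 : (a = 0 ∧ c = 0) ∨ (a = 0 ∧ e = 0) ∨ (c = 0 ∧ e = 0) := by
    rcases Nat.eq_zero_or_pos a with ha | ha
    · rcases Nat.eq_zero_or_pos c with hc | hc
      · exact Or.inl ⟨ha, hc⟩
      · rcases Nat.eq_zero_or_pos e with he | he
        · exact Or.inr (Or.inl ⟨ha, he⟩)
        · exact (key2L b d f c e hc he (by
            rw [ha, pow_zero, one_mul] at heq; exact heq)).elim
    · rcases Nat.eq_zero_or_pos c with hc | hc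
      · rcases Nat.eq_zero_or_pos e with he | he
        · exact Or.inr (Or.inr ⟨hc, he⟩)
        · exact (key2L d b f a e ha he (by
            rw [hc, pow_zero, one_mul] at heq; linarith)).elim
      · have he : e = 0 := by rcases h2z with h | h | h <;> omega
        exact (key2R b d f a c ha hc (by
          rw [he, pow_zero, one_mul] at heq; exact heq)).elim
  clear h2z hqz
  rcases Hq with ⟨hb, hd⟩ | ⟨hb, hf⟩ | ⟨hd, hf⟩ <;>
    rcases H2 with ⟨ha, hc⟩ | ⟨ha, he⟩ | ⟨hc, he⟩ <;>
    subst_vars <;>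
    simp only [pow_zero, one_mul, mul_one] at heq
  · -- 1 + 1 = 2^e * q^f
    have hf0 : f = 0 := by
      by_contra hcon
      have hd1 : q ∣ 2 ^ e * q ^ f :=
        dvd_mul_of_dvd_right (dvd_pow_self q hcon) _
      rw [← heq] at hd1
      norm_num at hd1
      have := Nat.le_of_dvd (by norm_num) hd1
      omega
    subst hf0
    rw [pow_zero, mul_one] at heq
    have he1 : e = 1 := Nat.pow_right_injective (le_refl 2)
      (show 2 ^ e = 2 ^ 1 by omega)
    exact ⟨rfl, rfl, rfl, rfl, he1, rfl⟩
  · -- 1 + 2^c = q^f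
    exact absurd (show q ^ f = 2 ^ c + 1 by omega) (hA f c)
  · -- 2^a + 1 = q^f
    exact absurd (show q ^ f = 2 ^ a + 1 by omega) (hA f a)
  · -- 1 + q^d = 2^e
    obtain ⟨hd0, he1⟩ := hB d e (by omega)
    exact ⟨rfl, rfl, rfl, hd0, he1, rfl⟩
  · -- 1 + 2^c * q^d = 1
    have : 0 < 2 ^ c * q ^ d := by positivity
    omega
  · -- 2^a + q^d = 1
    have h1 : 0 < 2 ^ a := Nat.pow_pos (n := a) (by norm_num)
    have h2 : 0 < q ^ d := Nat.pow_pos (n := d) (by omega)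
    omega
  · -- q^b + 1 = 2^e
    obtain ⟨hb0, he1⟩ := hB b e (by omega)
    exact ⟨rfl, hb0, rfl, rfl, he1, rfl⟩
  · -- q^b + 2^c = 1
    have h1 : 0 < 2 ^ c := Nat.pow_pos (n := c) (by norm_num)
    have h2 : 0 < q ^ b := Nat.pow_pos (n := b) (by omega)
    omega
  · -- 2^a * q^b + 1 = 1
    have : 0 < 2 ^ a * q ^ b := by positivity
    omega

/-- rational version of the classification -/
lemma qcore (q : ℕ) (hq : q.Prime) (hq3 : 3 < q)
    (hF : ∀ n : ℕ, q ≠ 2 ^ n + 1) (hM : ∀ n : ℕ, (q : ℤ) ≠ 2 ^ n - 1)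
    (a b c d e f : ℤ)
    (h : (2:ℚ) ^ a * (q:ℚ) ^ b + (2:ℚ) ^ c * (q:ℚ) ^ d = (2:ℚ) ^ e * (q:ℚ) ^ f) :
    c = a ∧ d = b ∧ e = a + 1 ∧ f = b := by
  have hq0 : (q:ℚ) ≠ 0 := by
    have : (0:ℚ) < q := by exact_mod_cast (show 0 < q by omega)
    exact ne_of_gt this
  have h20 : (2:ℚ) ≠ 0 := two_ne_zero
  set m := min (min a c) e with hm
  set n := min (min b d) f with hn
  have ex2 : ∀ x : ℤ, (2:ℚ) ^ (x - m) = 2 ^ x * 2 ^ (-m) := fun x => by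
    rw [sub_eq_add_neg, zpow_add₀ h20]
  have exq : ∀ x : ℤ, (q:ℚ) ^ (x - n) = (q:ℚ) ^ x * (q:ℚ) ^ (-n) := fun x => by
    rw [sub_eq_add_neg, zpow_add₀ hq0]
  have H : (2:ℚ) ^ (a - m) * (q:ℚ) ^ (b - n) + 2 ^ (c - m) * (q:ℚ) ^ (d - n)
      = 2 ^ (e - m) * (q:ℚ) ^ (f - n) := by
    rw [ex2, ex2, ex2, exq, exq, exq]
    linear_combination (2:ℚ) ^ (-m) * (q:ℚ) ^ (-n) * h
  set A := (a - m).toNat with hA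
  set B := (b - n).toNat with hB
  set C := (c - m).toNat with hC
  set D := (d - n).toNat with hD
  set E := (e - m).toNat with hE
  set F := (f - n).toNat with hF'
  have hA' : (A:ℤ) = a - m := by omega
  have hB' : (B:ℤ) = b - n := by omega
  have hC' : (C:ℤ) = c - m := by omega
  have hD' : (D:ℤ) = d - n := by omega
  have hE' : (E:ℤ) = e - m := by omega
  have hF'' : (F:ℤ) = f - n := by omega
  rw [← hA', ← hB', ← hC', ← hD', ← hE', ← hF'',
    zpow_natCast, zpow_natCast, zpow_natCast, zpow_natCast, zpow_natCast,
    zpow_natCast] at H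
  have key : 2 ^ A * q ^ B + 2 ^ C * q ^ D = 2 ^ E * q ^ F := by
    exact_mod_cast H
  have hz2 : A = 0 ∨ C = 0 ∨ E = 0 := by omega
  have hzq : B = 0 ∨ D = 0 ∨ F = 0 := by omega
  obtain ⟨h1, h2, h3, h4, h5, h6⟩ := core q hq hq3 hF hM A B C D E F key hz2 hzq
  refine ⟨by omega, by omega, by omega, by omega⟩

/-- `u` is a unit of `ℤ[1/(2q)]`, i.e. of the form `± 2^a q^b` with `a b : ℤ`. -/
def IsTwoQUnit (q : ℕ) (u : ℚ) : Prop :=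
  ∃ (ε : ℚ) (a b : ℤ), (ε = 1 ∨ ε = -1) ∧ u = ε * (2 : ℚ) ^ a * (q : ℚ) ^ b

theorem S_unit_solutions_two_q_generic (q : ℕ) (hq : q.Prime) (hq3 : 3 < q)
    (hFermat : ∀ n : ℕ, q ≠ 2 ^ n + 1) (hMersenne : ∀ n : ℕ, (q : ℤ) ≠ 2 ^ n - 1)
    (u : ℚ) :
    (IsTwoQUnit q u ∧ IsTwoQUnit q (1 - u)) ↔ (u = 2 ∨ u = -1 ∨ u = 1/2) := by
  have hq0 : (0:ℚ) < q := by exact_mod_cast (show 0 < q by omega)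
  constructor
  · rintro ⟨⟨ε, a, b, hε, hu⟩, ⟨δ, c, d, hδ, hv⟩⟩
    have heq : ε * 2 ^ a * (q:ℚ) ^ b + δ * 2 ^ c * (q:ℚ) ^ d = 1 := by
      linear_combination -hu - hv
    rcases hε with rfl | rfl <;> rcases hδ with rfl | rfl
    · -- ε = 1, δ = 1 : u = 1/2
      have h := qcore q hq hq3 hFermat hMersenne a b c d 0 0 (by
        simp only [zpow_zero, mul_one, one_mul]
        linear_combination heq)
      obtain ⟨-, -, h3, h4⟩ := h
      right; right
      rw [hu, show a = -1 by omega, show b = 0 by omega]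
      norm_num
    · -- ε = 1, δ = -1 : u = 2
      have h := qcore q hq hq3 hFermat hMersenne c d 0 0 a b (by
        simp only [zpow_zero, mul_one, one_mul]
        linear_combination -heq)
      obtain ⟨h1, h2, h3, h4⟩ := h
      left
      rw [hu, show a = 1 by omega, show b = 0 by omega]
      norm_num
    · -- ε = -1, δ = 1 : u = -1
      have h := qcore q hq hq3 hFermat hMersenne a b 0 0 c d (by
        simp only [zpow_zero, mul_one, one_mul]
        linear_combination -heq)
      obtain ⟨h1, h2, h3, h4⟩ := h
      right; left
      rw [hu, show a = 0 by omega, show b = 0 by omega]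
      norm_num
    · -- ε = -1, δ = -1 : impossible
      exfalso
      have p1 : (0:ℚ) < 2 ^ a * (q:ℚ) ^ b :=
        mul_pos (zpow_pos (by norm_num) a) (zpow_pos hq0 b)
      have p2 : (0:ℚ) < 2 ^ c * (q:ℚ) ^ d :=
        mul_pos (zpow_pos (by norm_num) c) (zpow_pos hq0 d)
      nlinarith [heq]
  · rintro (rfl | rfl | rfl)
    · exact ⟨⟨1, 1, 0, Or.inl rfl, by norm_num⟩,
        ⟨-1, 0, 0, Or.inr rfl, by norm_num⟩⟩
    · exact ⟨⟨-1, 0, 0, Or.inr rfl, by norm_num⟩,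
        ⟨1, 1, 0, Or.inl rfl, by norm_num⟩⟩
    · exact ⟨⟨1, -1, 0, Or.inl rfl, by norm_num⟩,
        ⟨1, -1, 0, Or.inl rfl, by norm_num⟩⟩
end

section
/- For S = {2, 3}, the set of solutions u ∈ ℤ[1/6]^× with 1 - u ∈ ℤ[1/6]^× is exactly {-1, 1/2, 2, -2, -1/2, 1/3, 2/3, 3/2, 3, -3, -1/3, 1/4, 3/4, 4/3, 4, -8, -1/8, 1/9, 8/9, 9/8, 9}. -/
def IntS (x : ℤ) : Prop := ∃ (s : ℤ) (a b : ℕ), (s = 1 ∨ s = -1) ∧ x = s * 2 ^ a * 3 ^ b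

def SPairs : List (ℤ × ℤ) :=
  [(1,2),(2,1),(-1,1),(4,1),(-2,1),(-8,1),(3,1),(9,1),(-3,1),(2,3),(8,9),(4,3),
   (3,4),(3,2),(9,8),(1,3),(1,9),(-1,3),(1,4),(-1,2),(-1,8)]

/-- `u` is a unit of `ℤ[1/6]`, i.e. of the form `± 2^a 3^b` with `a b : ℤ`. -/
def IsSixUnit (u : ℚ) : Prop :=
  ∃ (ε : ℚ) (a b : ℤ), (ε = 1 ∨ ε = -1) ∧ u = ε * (2 : ℚ) ^ a * (3 : ℚ) ^ b


lemma pow_inj23 {n a k : ℕ} (hn : 2 ≤ n) (h : n ^ a = n ^ k) : a = k :=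
  Nat.pow_right_injective hn h

lemma zmod_pow_reduce {n : ℕ} (x : ZMod n) (k : ℕ) (hx : x ^ k = 1) (b : ℕ) :
    x ^ b = x ^ (b % k) := by
  conv_lhs => rw [← Nat.div_add_mod b k, pow_add, pow_mul, hx, one_pow, one_mul]

lemma zmod_two_pow_zero {n : ℕ} (k : ℕ) (hx : (2 : ZMod n) ^ k = 0) {a : ℕ} (ha : k ≤ a) :
    (2 : ZMod n) ^ a = 0 := by
  obtain ⟨c, rfl⟩ : ∃ c, a = k + c := ⟨a - k, by omega⟩
  rw [pow_add, hx, zero_mul]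

lemma N1 (a b : ℕ) (h : 2 ^ a = 3 ^ b + 1) : (a = 1 ∧ b = 0) ∨ (a = 2 ∧ b = 1) := by
  have ha : a ≤ 2 := by
    by_contra hc
    push_neg at hc
    have h8 : ((2:ZMod 8) ^ a = (3:ZMod 8) ^ b + 1) := by
      have := congrArg (Nat.cast : ℕ → ZMod 8) h
      push_cast at this
      exact this
    rw [zmod_two_pow_zero 3 (by decide) (by omega)] at h8
    rw [zmod_pow_reduce (3:ZMod 8) 2 (by decide) b] at h8
    have hb2 : b % 2 = 0 ∨ b % 2 = 1 := by omega
    rcases hb2 with hb | hb <;> rw [hb] at h8 <;> revert h8 <;> decide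
  interval_cases a
  · have := Nat.one_le_pow b 3 (by norm_num); omega
  · have h3 : (3:ℕ) ^ b = 3 ^ 0 := by omega
    exact Or.inl ⟨rfl, pow_inj23 (by norm_num) h3⟩
  · have h3 : (3:ℕ) ^ b = 3 ^ 1 := by omega
    exact Or.inr ⟨rfl, pow_inj23 (by norm_num) h3⟩

lemma N2 (a b : ℕ) (h : 3 ^ b = 2 ^ a + 1) : (a = 1 ∧ b = 1) ∨ (a = 3 ∧ b = 2) := by
  have ha : a ≤ 3 := by
    by_contra hc
    push_neg at hc
    have h16 : ((3:ZMod 16) ^ b = (2:ZMod 16) ^ a + 1) := by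
      have := congrArg (Nat.cast : ℕ → ZMod 16) h
      push_cast at this
      exact this
    rw [zmod_two_pow_zero 4 (by decide) (by omega), zero_add] at h16
    rw [zmod_pow_reduce (3:ZMod 16) 4 (by decide) b] at h16
    have hb4 : b % 4 = 0 := by
      have : b % 4 = 0 ∨ b % 4 = 1 ∨ b % 4 = 2 ∨ b % 4 = 3 := by omega
      rcases this with hb | hb | hb | hb <;> rw [hb] at h16 <;>
        first | exact hb | exact absurd h16 (by decide)
    have h5 : ((3:ZMod 5) ^ b = (2:ZMod 5) ^ a + 1) := by
      have := congrArg (Nat.cast : ℕ → ZMod 5) h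
      push_cast at this
      exact this
    rw [zmod_pow_reduce (3:ZMod 5) 4 (by decide) b, hb4] at h5
    rw [zmod_pow_reduce (2:ZMod 5) 4 (by decide) a] at h5
    have : a % 4 = 0 ∨ a % 4 = 1 ∨ a % 4 = 2 ∨ a % 4 = 3 := by omega
    rcases this with haa | haa <;> [skip; rcases haa with haa | haa | haa] <;>
      rw [haa] at h5 <;> revert h5 <;> decide
  interval_cases a
  · have := Nat.one_le_pow b 3 (by norm_num)
    rcases Nat.eq_zero_or_pos b with hb | hb
    · simp [hb] at h
    · have : (3:ℕ) ∣ 3 ^ b := dvd_pow_self 3 (by omega)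
      omega
  · have h3 : (3:ℕ) ^ b = 3 ^ 1 := by omega
    exact Or.inl ⟨rfl, pow_inj23 (by norm_num) h3⟩
  · rcases Nat.eq_zero_or_pos b with hb | hb
    · simp [hb] at h
    · have : (3:ℕ) ∣ 3 ^ b := dvd_pow_self 3 (by omega)
      omega
  · have h3 : (3:ℕ) ^ b = 3 ^ 2 := by omega
    exact Or.inr ⟨rfl, pow_inj23 (by norm_num) h3⟩

lemma E3 (a b : ℕ) (h : 2 ^ a * 3 ^ b = 2) : a = 1 ∧ b = 0 := by
  have hb : b = 0 := by
    by_contra hb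
    have h3 : (3:ℕ) ∣ 2 := by
      rw [← h]
      exact Dvd.dvd.mul_left (dvd_pow_self 3 hb) _
    omega
  subst hb
  simp at h
  exact ⟨pow_inj23 (by norm_num) (by simpa using h : (2:ℕ)^a = 2^1), rfl⟩


lemma two_dvd_iff {s : ℤ} (hs : s = 1 ∨ s = -1) (a b : ℕ) :
    (2:ℤ) ∣ s * 2 ^ a * 3 ^ b ↔ a ≠ 0 := by
  constructor
  · intro h ha
    subst ha
    have h3 : (2:ℤ) ∣ 3 ^ b := by
      rcases hs with rfl | rfl
      · simpa using h
      · have := h.neg_right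
        simpa using this
    have := Int.Prime.dvd_pow' (by norm_num) h3
    norm_num at this
  · intro ha
    exact Dvd.dvd.mul_right ((dvd_pow_self 2 ha).mul_left s) _

lemma three_dvd_iff {s : ℤ} (hs : s = 1 ∨ s = -1) (a b : ℕ) :
    (3:ℤ) ∣ s * 2 ^ a * 3 ^ b ↔ b ≠ 0 := by
  constructor
  · intro h hb
    subst hb
    have h3 : (3:ℤ) ∣ 2 ^ a := by
      rcases hs with rfl | rfl
      · simpa using h
      · have := h.neg_right
        simpa using this
    have := Int.Prime.dvd_pow' (by norm_num) h3
    norm_num at this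
  · intro hb
    exact (dvd_pow_self 3 hb).mul_left _



section cases
variable {x z s1 s2 : ℤ} {a b : ℕ}

lemma one_le_2a (a : ℕ) : (1:ℤ) ≤ 2 ^ a := one_le_pow₀ (by norm_num)
lemma one_le_3b (b : ℕ) : (1:ℤ) ≤ 3 ^ b := one_le_pow₀ (by norm_num)

lemma C33 (hs1 : s1 = 1 ∨ s1 = -1) (hs2 : s2 = 1 ∨ s2 = -1)
    (hx : x = s1) (hz : z = 2 ^ a * 3 ^ b) (heq : s1 + s2 = 2 ^ a * 3 ^ b) :
    (x, z) ∈ SPairs := by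
  have e2 := one_le_2a a; have e3 := one_le_3b b
  have em : (1:ℤ) ≤ 2 ^ a * 3 ^ b := by nlinarith
  subst hx hz
  rcases hs1 with rfl | rfl <;> rcases hs2 with rfl | rfl
  · have hn : (2:ℕ) ^ a * 3 ^ b = 2 := by exact_mod_cast (by linear_combination -heq : (2:ℤ) ^ a * 3 ^ b = 2)
    obtain ⟨rfl, rfl⟩ := E3 a b hn
    decide
  all_goals exfalso; nlinarith

lemma C11 (hs1 : s1 = 1 ∨ s1 = -1) (hs2 : s2 = 1 ∨ s2 = -1)
    (hx : x = s1 * 2 ^ a * 3 ^ b) (hz : z = 1) (heq : s1 * 2 ^ a * 3 ^ b + s2 = 1) :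
    (x, z) ∈ SPairs := by
  have e2 := one_le_2a a; have e3 := one_le_3b b
  subst hx hz
  rcases hs1 with rfl | rfl <;> rcases hs2 with rfl | rfl
  · exfalso; nlinarith
  · have hn : (2:ℕ) ^ a * 3 ^ b = 2 := by exact_mod_cast (by linear_combination heq : (2:ℤ) ^ a * 3 ^ b = 2)
    obtain ⟨rfl, rfl⟩ := E3 a b hn
    decide
  · exfalso; nlinarith
  · exfalso; nlinarith

lemma C22 (hs1 : s1 = 1 ∨ s1 = -1) (hs2 : s2 = 1 ∨ s2 = -1)
    (hx : x = s1) (hz : z = 1) (heq : s1 + s2 * 2 ^ a * 3 ^ b = 1) :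
    (x, z) ∈ SPairs := by
  have e2 := one_le_2a a; have e3 := one_le_3b b
  subst hx hz
  rcases hs1 with rfl | rfl <;> rcases hs2 with rfl | rfl
  · exfalso; nlinarith
  · exfalso; nlinarith
  · have hn : (2:ℕ) ^ a * 3 ^ b = 2 := by exact_mod_cast (by linear_combination heq : (2:ℤ) ^ a * 3 ^ b = 2)
    obtain ⟨rfl, rfl⟩ := E3 a b hn
    decide
  · exfalso; nlinarith

lemma C12 (hs1 : s1 = 1 ∨ s1 = -1) (hs2 : s2 = 1 ∨ s2 = -1)
    (hx : x = s1 * 2 ^ a) (hz : z = 1) (heq : s1 * 2 ^ a + s2 * 3 ^ b = 1) :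
    (x, z) ∈ SPairs := by
  have e2 := one_le_2a a; have e3 := one_le_3b b
  subst hx hz
  rcases hs1 with rfl | rfl <;> rcases hs2 with rfl | rfl
  · exfalso; linarith
  · have hn : (2:ℕ) ^ a = 3 ^ b + 1 := by exact_mod_cast (by linear_combination heq : (2:ℤ) ^ a = 3 ^ b + 1)
    rcases N1 a b hn with ⟨rfl, rfl⟩ | ⟨rfl, rfl⟩ <;> decide
  · have hn : (3:ℕ) ^ b = 2 ^ a + 1 := by exact_mod_cast (by linear_combination heq : (3:ℤ) ^ b = 2 ^ a + 1)
    rcases N2 a b hn with ⟨rfl, rfl⟩ | ⟨rfl, rfl⟩ <;> decide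
  · exfalso; linarith

lemma C21 (hs1 : s1 = 1 ∨ s1 = -1) (hs2 : s2 = 1 ∨ s2 = -1)
    (hx : x = s1 * 3 ^ b) (hz : z = 1) (heq : s1 * 3 ^ b + s2 * 2 ^ a = 1) :
    (x, z) ∈ SPairs := by
  have e2 := one_le_2a a; have e3 := one_le_3b b
  subst hx hz
  rcases hs1 with rfl | rfl <;> rcases hs2 with rfl | rfl
  · exfalso; linarith
  · have hn : (3:ℕ) ^ b = 2 ^ a + 1 := by exact_mod_cast (by linear_combination heq : (3:ℤ) ^ b = 2 ^ a + 1)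
    rcases N2 a b hn with ⟨rfl, rfl⟩ | ⟨rfl, rfl⟩ <;> decide
  · have hn : (2:ℕ) ^ a = 3 ^ b + 1 := by exact_mod_cast (by linear_combination heq : (2:ℤ) ^ a = 3 ^ b + 1)
    rcases N1 a b hn with ⟨rfl, rfl⟩ | ⟨rfl, rfl⟩ <;> decide
  · exfalso; linarith

lemma C13 (hs1 : s1 = 1 ∨ s1 = -1) (hs2 : s2 = 1 ∨ s2 = -1)
    (hx : x = s1 * 2 ^ a) (hz : z = 3 ^ b) (heq : s1 * 2 ^ a + s2 = 3 ^ b) :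
    (x, z) ∈ SPairs := by
  have e2 := one_le_2a a; have e3 := one_le_3b b
  subst hx hz
  rcases hs1 with rfl | rfl <;> rcases hs2 with rfl | rfl
  · have hn : (3:ℕ) ^ b = 2 ^ a + 1 := by exact_mod_cast (by linear_combination -heq : (3:ℤ) ^ b = 2 ^ a + 1)
    rcases N2 a b hn with ⟨rfl, rfl⟩ | ⟨rfl, rfl⟩ <;> decide
  · have hn : (2:ℕ) ^ a = 3 ^ b + 1 := by exact_mod_cast (by linear_combination heq : (2:ℤ) ^ a = 3 ^ b + 1)
    rcases N1 a b hn with ⟨rfl, rfl⟩ | ⟨rfl, rfl⟩ <;> decide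
  · exfalso; linarith
  · exfalso; linarith

lemma C31 (hs1 : s1 = 1 ∨ s1 = -1) (hs2 : s2 = 1 ∨ s2 = -1)
    (hx : x = s1 * 3 ^ b) (hz : z = 2 ^ a) (heq : s1 * 3 ^ b + s2 = 2 ^ a) :
    (x, z) ∈ SPairs := by
  have e2 := one_le_2a a; have e3 := one_le_3b b
  subst hx hz
  rcases hs1 with rfl | rfl <;> rcases hs2 with rfl | rfl
  · have hn : (2:ℕ) ^ a = 3 ^ b + 1 := by exact_mod_cast (by linear_combination -heq : (2:ℤ) ^ a = 3 ^ b + 1)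
    rcases N1 a b hn with ⟨rfl, rfl⟩ | ⟨rfl, rfl⟩ <;> decide
  · have hn : (3:ℕ) ^ b = 2 ^ a + 1 := by exact_mod_cast (by linear_combination heq : (3:ℤ) ^ b = 2 ^ a + 1)
    rcases N2 a b hn with ⟨rfl, rfl⟩ | ⟨rfl, rfl⟩ <;> decide
  · exfalso; linarith
  · exfalso; linarith

lemma C23 (hs1 : s1 = 1 ∨ s1 = -1) (hs2 : s2 = 1 ∨ s2 = -1)
    (hx : x = s1) (hz : z = 3 ^ b) (heq : s1 + s2 * 2 ^ a = 3 ^ b) :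
    (x, z) ∈ SPairs := by
  have e2 := one_le_2a a; have e3 := one_le_3b b
  subst hx hz
  rcases hs1 with rfl | rfl <;> rcases hs2 with rfl | rfl
  · have hn : (3:ℕ) ^ b = 2 ^ a + 1 := by exact_mod_cast (by linear_combination -heq : (3:ℤ) ^ b = 2 ^ a + 1)
    rcases N2 a b hn with ⟨rfl, rfl⟩ | ⟨rfl, rfl⟩ <;> decide
  · exfalso; linarith
  · have hn : (2:ℕ) ^ a = 3 ^ b + 1 := by exact_mod_cast (by linear_combination heq : (2:ℤ) ^ a = 3 ^ b + 1)
    rcases N1 a b hn with ⟨rfl, rfl⟩ | ⟨rfl, rfl⟩ <;> decide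
  · exfalso; linarith

lemma C32 (hs1 : s1 = 1 ∨ s1 = -1) (hs2 : s2 = 1 ∨ s2 = -1)
    (hx : x = s1) (hz : z = 2 ^ a) (heq : s1 + s2 * 3 ^ b = 2 ^ a) :
    (x, z) ∈ SPairs := by
  have e2 := one_le_2a a; have e3 := one_le_3b b
  subst hx hz
  rcases hs1 with rfl | rfl <;> rcases hs2 with rfl | rfl
  · have hn : (2:ℕ) ^ a = 3 ^ b + 1 := by exact_mod_cast (by linear_combination -heq : (2:ℤ) ^ a = 3 ^ b + 1)
    rcases N1 a b hn with ⟨rfl, rfl⟩ | ⟨rfl, rfl⟩ <;> decide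
  · exfalso; linarith
  · have hn : (3:ℕ) ^ b = 2 ^ a + 1 := by exact_mod_cast (by linear_combination heq : (3:ℤ) ^ b = 2 ^ a + 1)
    rcases N2 a b hn with ⟨rfl, rfl⟩ | ⟨rfl, rfl⟩ <;> decide
  · exfalso; linarith

end cases



lemma DIV {n i j : ℕ} (h : n ∣ 2 ^ i * 3 ^ j) : ∃ a b, n = 2 ^ a * 3 ^ b := by
  obtain ⟨y, z, hy, hz, hyz⟩ := Nat.dvd_mul.mp h
  obtain ⟨a, -, rfl⟩ := (Nat.dvd_prime_pow Nat.prime_two).mp hy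
  obtain ⟨b, -, rfl⟩ := (Nat.dvd_prime_pow Nat.prime_three).mp hz
  exact ⟨a, b, hyz.symm⟩

lemma bridge (u : ℚ) (h : IsSixUnit u) :
    IntS u.num ∧ ∃ a b : ℕ, (u.den : ℤ) = 2 ^ a * 3 ^ b := by
  obtain ⟨ε, a, b, hε, hu⟩ := h
  set ap := a.toNat with hap
  set am := (-a).toNat with ham
  set bp := b.toNat with hbp
  set bm := (-b).toNat with hbm
  have h2 : (2:ℚ) ^ a * (2:ℚ) ^ (am:ℕ) = 2 ^ (ap:ℕ) := by
    rw [← zpow_natCast (2:ℚ) am, ← zpow_natCast (2:ℚ) ap, ← zpow_add₀ (by norm_num : (2:ℚ) ≠ 0)]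
    congr 1
    omega
  have h3 : (3:ℚ) ^ b * (3:ℚ) ^ (bm:ℕ) = 3 ^ (bp:ℕ) := by
    rw [← zpow_natCast (3:ℚ) bm, ← zpow_natCast (3:ℚ) bp, ← zpow_add₀ (by norm_num : (3:ℚ) ≠ 0)]
    congr 1
    omega
  have hd : (u.den : ℚ) ≠ 0 := Nat.cast_ne_zero.mpr u.den_nz
  have hmul : u * (u.den : ℚ) = u.num := Rat.mul_den_eq_num u
  have hnum : (u.num : ℚ) = ε * 2 ^ a * 3 ^ b * u.den := by rw [← hmul, hu]
  have key : (u.num : ℚ) * (2 ^ am * 3 ^ bm) = ε * (2 ^ ap * 3 ^ bp) * u.den := by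
    rw [hnum, ← h2, ← h3]; ring
  obtain ⟨s, hs, hsε⟩ : ∃ s : ℤ, (s = 1 ∨ s = -1) ∧ (s : ℚ) = ε := by
    rcases hε with rfl | rfl
    · exact ⟨1, Or.inl rfl, by norm_num⟩
    · exact ⟨-1, Or.inr rfl, by norm_num⟩
  have keyZ : u.num * (2 ^ am * 3 ^ bm) = s * (2 ^ ap * 3 ^ bp) * (u.den : ℤ) := by
    have : ((u.num * (2 ^ am * 3 ^ bm) : ℤ) : ℚ) = ((s * (2 ^ ap * 3 ^ bp) * u.den : ℤ) : ℚ) := by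
      push_cast
      rw [hsε]
      exact key
    exact_mod_cast this
  have hcop : IsCoprime u.num (u.den : ℤ) := by
    rw [Int.isCoprime_iff_gcd_eq_one]
    exact u.reduced
  constructor
  · have hdvd : u.num ∣ (u.den : ℤ) * (s * (2 ^ ap * 3 ^ bp)) := by
      refine ⟨2 ^ am * 3 ^ bm, ?_⟩
      rw [keyZ]; ring
    have hdvd2 : u.num ∣ s * (2 ^ ap * 3 ^ bp) := hcop.dvd_of_dvd_mul_left hdvd
    have hdvd3 : u.num ∣ (2 ^ ap * 3 ^ bp : ℤ) := by
      rcases hs with rfl | rfl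
      · simpa using hdvd2
      · have := hdvd2.neg_right
        simpa using this
    have hnat : u.num.natAbs ∣ 2 ^ ap * 3 ^ bp := by
      have := Int.natAbs_dvd_natAbs.mpr hdvd3
      simpa [Int.natAbs_mul, Int.natAbs_pow] using this
    obtain ⟨a', b', hab⟩ := DIV hnat
    rcases Int.natAbs_eq u.num with he | he
    · exact ⟨1, a', b', Or.inl rfl, by rw [he, hab]; push_cast; ring⟩
    · exact ⟨-1, a', b', Or.inr rfl, by rw [he, hab]; push_cast; ring⟩
  · have hdvd : (u.den : ℤ) ∣ u.num * (2 ^ am * 3 ^ bm) := by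
      refine ⟨s * (2 ^ ap * 3 ^ bp), ?_⟩
      rw [keyZ]; ring
    have hdvd2 : (u.den : ℤ) ∣ (2 ^ am * 3 ^ bm : ℤ) := hcop.symm.dvd_of_dvd_mul_left hdvd
    have hnat : u.den ∣ 2 ^ am * 3 ^ bm := by
      have : (u.den : ℤ) ∣ ((2 ^ am * 3 ^ bm : ℕ) : ℤ) := by push_cast; exact hdvd2
      exact_mod_cast this
    obtain ⟨a', b', hab⟩ := DIV hnat
    exact ⟨a', b', by rw [hab]; push_cast; ring⟩




lemma KEY (x y z : ℤ) (hxy : x + y = z) (hX : IntS x) (hY : IntS y)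
    (hZ : ∃ a b : ℕ, z = 2 ^ a * 3 ^ b)
    (h2 : ¬((2:ℤ) ∣ x ∧ (2:ℤ) ∣ z)) (h3 : ¬((3:ℤ) ∣ x ∧ (3:ℤ) ∣ z)) :
    (x, z) ∈ SPairs := by
  obtain ⟨s1, a1, b1, hs1, hx⟩ := hX
  obtain ⟨s2, a2, b2, hs2, hy⟩ := hY
  obtain ⟨a3, b3, hz⟩ := hZ
  have d2x : (2:ℤ) ∣ x ↔ a1 ≠ 0 := by rw [hx]; exact two_dvd_iff hs1 _ _
  have d2y : (2:ℤ) ∣ y ↔ a2 ≠ 0 := by rw [hy]; exact two_dvd_iff hs2 _ _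
  have d2z : (2:ℤ) ∣ z ↔ a3 ≠ 0 := by
    rw [hz, show (2:ℤ) ^ a3 * 3 ^ b3 = 1 * 2 ^ a3 * 3 ^ b3 by ring]
    exact two_dvd_iff (Or.inl rfl) _ _
  have d3x : (3:ℤ) ∣ x ↔ b1 ≠ 0 := by rw [hx]; exact three_dvd_iff hs1 _ _
  have d3y : (3:ℤ) ∣ y ↔ b2 ≠ 0 := by rw [hy]; exact three_dvd_iff hs2 _ _
  have d3z : (3:ℤ) ∣ z ↔ b3 ≠ 0 := by
    rw [hz, show (2:ℤ) ^ a3 * 3 ^ b3 = 1 * 2 ^ a3 * 3 ^ b3 by ring]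
    exact three_dvd_iff (Or.inl rfl) _ _
  have hA : (a1 = 0 ∧ a2 = 0) ∨ (a1 = 0 ∧ a3 = 0) ∨ (a2 = 0 ∧ a3 = 0) := by
    have q12 : ¬(a1 ≠ 0 ∧ a2 ≠ 0) := by
      rintro ⟨u1, u2⟩
      exact h2 ⟨d2x.mpr u1, hxy ▸ dvd_add (d2x.mpr u1) (d2y.mpr u2)⟩
    have q13 : ¬(a1 ≠ 0 ∧ a3 ≠ 0) := by
      rintro ⟨u1, u3⟩; exact h2 ⟨d2x.mpr u1, d2z.mpr u3⟩
    have q23 : ¬(a2 ≠ 0 ∧ a3 ≠ 0) := by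
      rintro ⟨u2, u3⟩
      have hdx : (2:ℤ) ∣ x := by
        rw [show x = z - y by omega]
        exact dvd_sub (d2z.mpr u3) (d2y.mpr u2)
      exact h2 ⟨hdx, d2z.mpr u3⟩
    omega
  have hB : (b1 = 0 ∧ b2 = 0) ∨ (b1 = 0 ∧ b3 = 0) ∨ (b2 = 0 ∧ b3 = 0) := by
    have q12 : ¬(b1 ≠ 0 ∧ b2 ≠ 0) := by
      rintro ⟨u1, u2⟩
      exact h3 ⟨d3x.mpr u1, hxy ▸ dvd_add (d3x.mpr u1) (d3y.mpr u2)⟩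
    have q13 : ¬(b1 ≠ 0 ∧ b3 ≠ 0) := by
      rintro ⟨u1, u3⟩; exact h3 ⟨d3x.mpr u1, d3z.mpr u3⟩
    have q23 : ¬(b2 ≠ 0 ∧ b3 ≠ 0) := by
      rintro ⟨u2, u3⟩
      have hdx : (3:ℤ) ∣ x := by
        rw [show x = z - y by omega]
        exact dvd_sub (d3z.mpr u3) (d3y.mpr u2)
      exact h3 ⟨hdx, d3z.mpr u3⟩
    omega
  rw [hx, hy, hz] at hxy
  rcases hA with ⟨e1, e2⟩ | ⟨e1, e2⟩ | ⟨e1, e2⟩ <;> subst e1 <;> subst e2 <;>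
    rcases hB with ⟨f1, f2⟩ | ⟨f1, f2⟩ | ⟨f1, f2⟩ <;> subst f1 <;> subst f2
  -- c2 = 3 (a1=a2=0)
  · exact C33 (a := a3) (b := b3) hs1 hs2 (by rw [hx]; try ring) (by rw [hz]; try ring) (by linear_combination hxy)
  · exact C32 (a := a3) (b := b2) hs1 hs2 (by rw [hx]; try ring) (by rw [hz]; try ring) (by linear_combination hxy)
  · exact C31 (a := a3) (b := b1) hs1 hs2 (by rw [hx]; try ring) (by rw [hz]; try ring) (by linear_combination hxy)
  -- c2 = 2 (a1=a3=0)
  · exact C23 (a := a2) (b := b3) hs1 hs2 (by rw [hx]; try ring) (by rw [hz]; try ring) (by linear_combination hxy)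
  · exact C22 (a := a2) (b := b2) hs1 hs2 (by rw [hx]; try ring) (by rw [hz]; try ring) (by linear_combination hxy)
  · exact C21 (a := a2) (b := b1) hs1 hs2 (by rw [hx]; try ring) (by rw [hz]; try ring) (by linear_combination hxy)
  -- c2 = 1 (a2=a3=0)
  · exact C13 (a := a1) (b := b3) hs1 hs2 (by rw [hx]; try ring) (by rw [hz]; try ring) (by linear_combination hxy)
  · exact C12 (a := a1) (b := b2) hs1 hs2 (by rw [hx]; try ring) (by rw [hz]; try ring) (by linear_combination hxy)
  · exact C11 (a := a1) (b := b1) hs1 hs2 (by rw [hx]; try ring) (by rw [hz]; try ring) (by linear_combination hxy)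

lemma mk6 (a b : ℤ) (u : ℚ) (h : u = (2:ℚ) ^ a * 3 ^ b) : IsSixUnit u :=
  ⟨1, a, b, Or.inl rfl, by rw [h]; ring⟩

lemma mk6' (a b : ℤ) (u : ℚ) (h : u = -((2:ℚ) ^ a * 3 ^ b)) : IsSixUnit u :=
  ⟨-1, a, b, Or.inr rfl, by rw [h]; ring⟩

theorem S_unit_solutions_two_three (u : ℚ) :
    (IsSixUnit u ∧ IsSixUnit (1 - u)) ↔
      u ∈ ({-1, 1/2, 2, -2, -1/2, 1/3, 2/3, 3/2, 3, -3, -1/3, 1/4, 3/4, 4/3, 4,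
            -8, -1/8, 1/9, 8/9, 9/8, 9} : Set ℚ) := by
  constructor
  · rintro ⟨hu1, hu2⟩
    obtain ⟨hnum, a', b', hden⟩ := bridge u hu1
    set x := u.num with hxdef
    set z := ((u.den : ℤ)) with hzdef
    have hz0 : (0:ℤ) < z := Int.natCast_pos.mpr u.pos
    have hzq : ((z : ℤ) : ℚ) ≠ 0 := by
      simp only [ne_eq, Int.cast_eq_zero]
      omega
    have hu : u = ((x : ℤ) : ℚ) / ((z : ℤ) : ℚ) := by
      rw [hxdef, hzdef]
      push_cast
      exact (Rat.num_div_den u).symm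
    have hcop : IsCoprime x z := by
      rw [Int.isCoprime_iff_gcd_eq_one]
      exact u.reduced
    have hcop2 : IsCoprime (z - x) z := by
      have h := (hcop.neg_left).add_mul_left_left 1
      have e : -x + z * 1 = z - x := by ring
      rwa [e] at h
    have hval : 1 - u = ((z - x : ℤ) : ℚ) / ((z : ℤ) : ℚ) := by
      rw [hu]
      field_simp
      rw [Int.cast_sub]
    have hnum1u : (1 - u).num = z - x := by
      rw [hval]
      exact Rat.num_div_eq_of_coprime hz0
        (Int.isCoprime_iff_gcd_eq_one.mp hcop2)
    have hy : IntS (z - x) := by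
      have := (bridge (1 - u) hu2).1
      rwa [hnum1u] at this
    have h2 : ¬((2:ℤ) ∣ x ∧ (2:ℤ) ∣ z) := by
      rintro ⟨d1, d2⟩
      have := hcop.isUnit_of_dvd' d1 d2
      rw [Int.isUnit_iff] at this
      omega
    have h3 : ¬((3:ℤ) ∣ x ∧ (3:ℤ) ∣ z) := by
      rintro ⟨d1, d2⟩
      have := hcop.isUnit_of_dvd' d1 d2
      rw [Int.isUnit_iff] at this
      omega
    have hmem := KEY x (z - x) z (by ring) hnum hy ⟨a', b', hden⟩ h2 h3
    simp only [SPairs, List.mem_cons, List.not_mem_nil, or_false, Prod.mk.injEq] at hmem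
    simp only [Set.mem_insert_iff, Set.mem_singleton_iff]
    rcases hmem with ⟨h1, h2⟩|⟨h1, h2⟩|⟨h1, h2⟩|⟨h1, h2⟩|⟨h1, h2⟩|⟨h1, h2⟩|⟨h1, h2⟩|
      ⟨h1, h2⟩|⟨h1, h2⟩|⟨h1, h2⟩|⟨h1, h2⟩|⟨h1, h2⟩|⟨h1, h2⟩|⟨h1, h2⟩|⟨h1, h2⟩|⟨h1, h2⟩|
      ⟨h1, h2⟩|⟨h1, h2⟩|⟨h1, h2⟩|⟨h1, h2⟩|⟨h1, h2⟩ <;>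
      rw [hu, h1, h2] <;> norm_num
  · intro hmem
    simp only [Set.mem_insert_iff, Set.mem_singleton_iff] at hmem
    rcases hmem with rfl|rfl|rfl|rfl|rfl|rfl|rfl|rfl|rfl|rfl|rfl|rfl|rfl|rfl|rfl|rfl|rfl|rfl|rfl|rfl|rfl
    · exact ⟨mk6' 0 0 _ (by norm_num), mk6 1 0 _ (by norm_num)⟩
    · exact ⟨mk6 (-1) 0 _ (by norm_num), mk6 (-1) 0 _ (by norm_num)⟩
    · exact ⟨mk6 1 0 _ (by norm_num), mk6' 0 0 _ (by norm_num)⟩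
    · exact ⟨mk6' 1 0 _ (by norm_num), mk6 0 1 _ (by norm_num)⟩
    · exact ⟨mk6' (-1) 0 _ (by norm_num), mk6 (-1) 1 _ (by norm_num)⟩
    · exact ⟨mk6 0 (-1) _ (by norm_num), mk6 1 (-1) _ (by norm_num)⟩
    · exact ⟨mk6 1 (-1) _ (by norm_num), mk6 0 (-1) _ (by norm_num)⟩
    · exact ⟨mk6 (-1) 1 _ (by norm_num), mk6' (-1) 0 _ (by norm_num)⟩
    · exact ⟨mk6 0 1 _ (by norm_num), mk6' 1 0 _ (by norm_num)⟩
    · exact ⟨mk6' 0 1 _ (by norm_num), mk6 2 0 _ (by norm_num)⟩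
    · exact ⟨mk6' 0 (-1) _ (by norm_num), mk6 2 (-1) _ (by norm_num)⟩
    · exact ⟨mk6 (-2) 0 _ (by norm_num), mk6 (-2) 1 _ (by norm_num)⟩
    · exact ⟨mk6 (-2) 1 _ (by norm_num), mk6 (-2) 0 _ (by norm_num)⟩
    · exact ⟨mk6 2 (-1) _ (by norm_num), mk6' 0 (-1) _ (by norm_num)⟩
    · exact ⟨mk6 2 0 _ (by norm_num), mk6' 0 1 _ (by norm_num)⟩
    · exact ⟨mk6' 3 0 _ (by norm_num), mk6 0 2 _ (by norm_num)⟩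
    · exact ⟨mk6' (-3) 0 _ (by norm_num), mk6 (-3) 2 _ (by norm_num)⟩
    · exact ⟨mk6 0 (-2) _ (by norm_num), mk6 3 (-2) _ (by norm_num)⟩
    · exact ⟨mk6 3 (-2) _ (by norm_num), mk6 0 (-2) _ (by norm_num)⟩
    · exact ⟨mk6 (-3) 2 _ (by norm_num), mk6' (-3) 0 _ (by norm_num)⟩
    · exact ⟨mk6 0 2 _ (by norm_num), mk6' 3 0 _ (by norm_num)⟩
end
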